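/- Let H ∈ (0,1), p ∈ ℤ, q a positive integer, r > 0, and let θ := arctan(p/q), so that cos θ = q/√(p² + q²) and sin θ = p/√(p² + q²). Then for all integers k₁, k₂, k₁′, k₂′, the fractional Brownian covariance kernel satisfies K_H((k₁ cos θ + k₂ sin θ)/r, (k₁′ cos θ + k₂′ sin θ)/r) = (cos θ/(r q))^{2H} · K_H(k₁ q + k₂ p, k₁′ q + k₂′ p). (This is the key identity of the turning-band method: along a band of rational slope p/q, the restriction of a fractional Brownian motion to the projected grid has, up to the scale factor (cos θ/(rq))^H, the same covariance as the fractional Brownian motion sampled at the integer points k₁q + k₂p, allowing exact fast synthesis on a regular grid.) -/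

import Mathlib

open Real

noncomputable section

/-- The covariance kernel of fractional Brownian motion of Hurst index `H`. -/
def fbmCov (H s t : ℝ) : ℝ := (|s| ^ (2 * H) + |t| ^ (2 * H) - |s - t| ^ (2 * H)) / 2

lemma fbmCov_smul (H c a b : ℝ) (hc : 0 ≤ c) :
    fbmCov H (c * a) (c * b) = c ^ (2 * H) * fbmCov H a b := by
  have key : ∀ x : ℝ, |c * x| ^ (2 * H) = c ^ (2 * H) * |x| ^ (2 * H) := by
    intro x
    rw [abs_mul, abs_of_nonneg hc, Real.mul_rpow hc (abs_nonneg x)]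
  simp only [fbmCov, ← mul_sub c a b, key]
  ring

/-- Key identity of the turning-band method: along a band of rational slope
`p/q` (with angle `θ = arctan(p/q)`), the fractional Brownian covariance on the
projected grid points `(k₁ cos θ + k₂ sin θ)/r` equals, up to the factor
`(cos θ/(rq))^{2H}`, the fractional Brownian covariance at the integers
`k₁q + k₂p`. -/
theorem turning_band_covariance_identity (H : ℝ) (hH : H ∈ Set.Ioo (0 : ℝ) 1)
    (p : ℤ) (q : ℤ) (hq : 0 < q) (r : ℝ) (hr : 0 < r)
    (θ : ℝ) (hθ : θ = Real.arctan ((p : ℝ) / (q : ℝ)))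
    (k₁ k₂ k₁' k₂' : ℤ) :
    fbmCov H (((k₁ : ℝ) * Real.cos θ + (k₂ : ℝ) * Real.sin θ) / r)
        (((k₁' : ℝ) * Real.cos θ + (k₂' : ℝ) * Real.sin θ) / r) =
      (Real.cos θ / (r * (q : ℝ))) ^ (2 * H) *
        fbmCov H ((k₁ * q + k₂ * p : ℤ) : ℝ) ((k₁' * q + k₂' * p : ℤ) : ℝ) := by
  have hq' : (0 : ℝ) < (q : ℝ) := by exact_mod_cast hq
  have hcos : 0 < Real.cos θ := by rw [hθ]; exact Real.cos_arctan_pos _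
  have htan : Real.tan θ = (p : ℝ) / (q : ℝ) := by rw [hθ]; exact Real.tan_arctan _
  have hsin : Real.sin θ = (p : ℝ) / (q : ℝ) * Real.cos θ := by
    rw [← htan, Real.tan_eq_sin_div_cos]
    field_simp
  set c := Real.cos θ / (r * (q : ℝ)) with hc
  have hc0 : 0 ≤ c := le_of_lt (div_pos hcos (mul_pos hr hq'))
  have harg : ∀ a b : ℤ, ((a : ℝ) * Real.cos θ + (b : ℝ) * Real.sin θ) / r
      = c * ((a * q + b * p : ℤ) : ℝ) := by
    intro a b
    rw [hsin, hc]
    push_cast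
    field_simp
  rw [harg, harg, fbmCov_smul _ _ _ _ hc0]

end
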